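/- Let p be an odd prime and m ≥ 1, and let Tr : GF(p^m) → GF(p) be the trace map. Then Q_0(x) := Tr(x^{p^m+1}) is a nondegenerate quadratic form on GF(p^{2m}) viewed as a vector space over GF(p). -/

import Mathlib

/-- The trace-like map x ↦ x + x^p + ... + x^(p^(m-1)), computed inside the big field. -/
def fieldTr (p m : ℕ) {F : Type} [Field F] (x : F) : F :=
  ∑ i ∈ Finset.range m, x ^ p ^ i

section Aux

variable {p : ℕ} {K : Type} [Field K]

lemma fieldTr_add [hP : Fact p.Prime] [CharP K p] (n : ℕ) (x y : K) :
    fieldTr p n (x + y) = fieldTr p n x + fieldTr p n y := by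
  simp [fieldTr, add_pow_char_pow, Finset.sum_add_distrib]

lemma pow_pow_eq_self {a : K} (h : a ^ p = a) : ∀ i, a ^ p ^ i = a := by
  intro i
  induction i with
  | zero => simp
  | succ k ih => rw [pow_succ, pow_mul, ih, h]

lemma fieldTr_smul (n : ℕ) {a : K} (h : a ^ p = a) (x : K) :
    fieldTr p n (a * x) = a * fieldTr p n x := by
  simp [fieldTr, mul_pow, pow_pow_eq_self h, Finset.mul_sum]

end Aux

theorem denniston_stmt4 (p m : ℕ) (hp : p.Prime) (hodd : Odd p) (hm : 1 ≤ m)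
    (K : Type) [Field K] [Fintype K] (hK : Fintype.card K = p ^ (2 * m))
    (Q₀ : K → K) (hQdef : ∀ x : K, Q₀ x = fieldTr p m (x ^ (p ^ m + 1)))
    (R₀ : K → K → K) (hRdef : ∀ u v : K, R₀ u v = Q₀ (u + v) - Q₀ u - Q₀ v) :
    (∀ a x : K, a ^ p = a → Q₀ (a * x) = a ^ 2 * Q₀ x) ∧
    (∀ u₁ u₂ v : K, R₀ (u₁ + u₂) v = R₀ u₁ v + R₀ u₂ v) ∧
    (∀ u v₁ v₂ : K, R₀ u (v₁ + v₂) = R₀ u v₁ + R₀ u v₂) ∧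
    (∀ a u v : K, a ^ p = a → R₀ (a * u) v = a * R₀ u v ∧ R₀ u (a * v) = a * R₀ u v) ∧
    (∀ u : K, (∀ v : K, R₀ u v = 0) → u = 0) := by
  haveI : Fact p.Prime := ⟨hp⟩
  -- the characteristic of K is p
  haveI hch : CharP K p := by
    have h1 : CharP K (ringChar K) := ringChar.charP K
    have h2 : (ringChar K).Prime := CharP.char_is_prime K (ringChar K)
    obtain ⟨n, hn⟩ := FiniteField.card K (ringChar K)
    have hdvd : ringChar K ∣ p ^ (2 * m) := by
      rw [← hK, hn.2]
      exact dvd_pow_self _ (by exact_mod_cast n.ne_zero)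
    have := (Nat.Prime.dvd_of_dvd_pow h2 hdvd)
    have : ringChar K = p := (Nat.prime_dvd_prime_iff_eq h2 hp).mp this
    rwa [this] at h1
  set q := p ^ m with hqdef
  have hpow_card : ∀ x : K, x ^ p ^ (2 * m) = x := by
    intro x; rw [← hK]; exact FiniteField.pow_card x
  have hqq : ∀ x : K, (x ^ q) ^ q = x := by
    intro x
    rw [← pow_mul, hqdef, ← pow_add, ← two_mul]
    exact hpow_card x
  -- key expansion of R₀
  have hR : ∀ u v : K, R₀ u v = fieldTr p m (u * v ^ q + u ^ q * v) := by
    intro u v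
    rw [hRdef, hQdef, hQdef, hQdef]
    have hexp : (u + v) ^ (q + 1) = u ^ (q + 1) + (u * v ^ q + u ^ q * v) + v ^ (q + 1) := by
      rw [pow_succ, pow_succ, pow_succ, add_pow_char_pow]
      ring
    rw [hexp, fieldTr_add, fieldTr_add]
    ring
  refine ⟨?_, ?_, ?_, ?_, ?_⟩
  · -- Q₀ (a x) = a² Q₀ x
    intro a x ha
    rw [hQdef, hQdef, mul_pow, pow_succ, pow_pow_eq_self ha m, ← sq,
      ← fieldTr_smul m (show (a ^ 2 : K) ^ p = a ^ 2 by rw [← pow_mul, mul_comm, pow_mul, ha])]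
  · intro u₁ u₂ v
    rw [hR, hR, hR, add_pow_char_pow, ← hqdef, ← fieldTr_add]
    ring_nf
  · intro u v₁ v₂
    rw [hR, hR, hR, add_pow_char_pow, ← hqdef, ← fieldTr_add]
    ring_nf
  · intro a u v ha
    constructor
    · rw [hR, hR, mul_pow, pow_pow_eq_self ha m, ← fieldTr_smul m ha]
      ring_nf
    · rw [hR, hR, mul_pow, pow_pow_eq_self ha m, ← fieldTr_smul m ha]
      ring_nf
  · -- nondegeneracy
    intro u hu
    by_contra hu0
    -- full trace
    set T : K → K := fieldTr p (2 * m) with hT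
    have hTfrob : ∀ x : K, T (x ^ p) = T x := by
      intro x
      have hfun : ∀ i, (x ^ p) ^ p ^ i = x ^ p ^ (i + 1) := by
        intro i; rw [← pow_mul, ← pow_succ']
      calc T (x ^ p) = ∑ i ∈ Finset.range (2 * m), x ^ p ^ (i + 1) := by
            simp [hT, fieldTr, hfun]
        _ = ∑ i ∈ Finset.range (2 * m + 1), x ^ p ^ i - x ^ p ^ 0 := by
            rw [Finset.sum_range_succ' (fun i => x ^ p ^ i)]; ring
        _ = T x := by
            rw [Finset.sum_range_succ, hpow_card x]
            simp [hT, fieldTr]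
    have hTpk : ∀ (k : ℕ) (x : K), T (x ^ p ^ k) = T x := by
      intro k
      induction k with
      | zero => simp
      | succ j ih => intro x; rw [pow_succ, pow_mul, hTfrob, ih]
    -- T s = 2 * fieldTr p m s for s fixed by x ↦ x^q
    have hTr2 : ∀ s : K, s ^ q = s → T s = 2 * fieldTr p m s := by
      intro s hs
      have : T s = ∑ i ∈ Finset.range m, s ^ p ^ i
          + ∑ i ∈ Finset.range m, s ^ p ^ (m + i) := by
        rw [hT, fieldTr, two_mul, Finset.sum_range_add]
      rw [this]
      have h2 : ∀ i, s ^ p ^ (m + i) = s ^ p ^ i := by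
        intro i
        rw [pow_add, pow_mul, ← hqdef, hs]
      simp only [h2, fieldTr, two_mul]
    -- hence T (u * v^q) = 0 for all v
    have hTuv : ∀ v : K, T (u * v ^ q) = 0 := by
      intro v
      have hs : (u * v ^ q + u ^ q * v) ^ q = u * v ^ q + u ^ q * v := by
        rw [add_pow_char_pow, mul_pow, mul_pow, hqq v, hqq u]
        ring
      have h0 : T (u * v ^ q + u ^ q * v) = 0 := by
        rw [hTr2 _ hs, ← hR u v, hu v, mul_zero]
      have hsplit : T (u * v ^ q + u ^ q * v) = T (u * v ^ q) + T (u ^ q * v) := by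
        simp [hT, fieldTr_add]
      have hswap : T (u ^ q * v) = T (u * v ^ q) := by
        have : (u * v ^ q) ^ q = u ^ q * v := by rw [mul_pow, hqq]
        rw [← this, hqdef, hTpk]
      have h2ne : (2 : K) ≠ 0 := by
        have hp2 : p ≠ 2 := by rintro rfl; exact (Nat.not_odd_iff_even.mpr even_two) hodd
        intro h
        have := (CharP.cast_eq_zero_iff K p 2).mp (by exact_mod_cast h)
        exact hp2 ((Nat.prime_dvd_prime_iff_eq hp Nat.prime_two).mp this)
      rw [hsplit, hswap] at h0
      have h2t : (2 : K) * T (u * v ^ q) = 0 := by rw [two_mul]; exact h0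
      exact (mul_eq_zero.mp h2t).resolve_left h2ne
    -- v ↦ v^q is surjective
    have hqsurj : Function.Surjective (fun v : K => v ^ q) := by
      have hinj : Function.Injective (fun v : K => v ^ q) := by
        intro a b hab
        have : (a - b) ^ q = 0 := by
          rw [sub_pow_char_pow]; simpa [sub_eq_zero] using hab
        have := pow_eq_zero_iff (pow_ne_zero m hp.ne_zero) |>.mp this
        exact sub_eq_zero.mp this
      exact Finite.surjective_of_injective hinj
    have hTuw : ∀ w : K, T (u * w) = 0 := by
      intro w
      obtain ⟨v, hv⟩ := hqsurj w
      rw [← hv]; exact hTuv v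
    have hTall : ∀ t : K, T t = 0 := by
      intro t
      have := hTuw (u⁻¹ * t)
      rwa [← mul_assoc, mul_inv_cancel₀ hu0, one_mul] at this
    -- but T is not identically zero: polynomial argument
    set P : Polynomial K := ∑ i ∈ Finset.range (2 * m), Polynomial.X ^ p ^ i with hP
    have heval : ∀ x : K, P.eval x = T x := by
      intro x; simp [hP, hT, fieldTr, Polynomial.eval_finset_sum]
    have hdeg : P.natDegree < Fintype.card K := by
      have h1 : P.natDegree ≤ p ^ (2 * m - 1) := by
        apply Polynomial.natDegree_sum_le_of_forall_le
        intro i hi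
        rw [Polynomial.natDegree_X_pow]
        exact Nat.pow_le_pow_right hp.one_lt.le
          (Nat.le_sub_one_of_lt (Finset.mem_range.mp hi))
      have h2 : p ^ (2 * m - 1) < p ^ (2 * m) :=
        Nat.pow_lt_pow_right hp.one_lt (by omega)
      rw [hK]; omega
    have hP0 : P = 0 :=
      Polynomial.eq_zero_of_natDegree_lt_card_of_eval_eq_zero P Function.injective_id
        (fun x => by rw [heval, hTall]) hdeg
    have hc : P.coeff 1 = 1 := by
      rw [hP, Polynomial.finset_sum_coeff]
      simp only [Polynomial.coeff_X_pow]
      rw [Finset.sum_eq_single 0]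
      · simp
      · intro i hi hne
        have : 1 < p ^ i := Nat.one_lt_pow hne hp.one_lt
        simp [Nat.ne_of_lt this]
      · intro h
        exact absurd (Finset.mem_range.mpr (by omega)) h
    rw [hP0] at hc
    simp at hc
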